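/- In a pentagonal geometry PENT(3,r), the number of opposite line pairs is at most (r+2)/3 if r ≡ 1 (mod 3), and at most (r-3)/3 if r ≡ 0 (mod 3). -/

import Mathlib

open scoped Classical

/-- A pentagonal geometry PENT(k,r). -/
structure PentGeom (V : Type) [Fintype V] [DecidableEq V] (k r : ℕ) : Type where
  lines : Finset (Finset V)
  size_pos : 2 ≤ k
  rep_pos : 1 ≤ r
  pairwise : ∀ x y : V, x ≠ y → (lines.filter (fun l => x ∈ l ∧ y ∈ l)).card ≤ 1
  uniform : ∀ l ∈ lines, l.card = k
  regular : ∀ x : V, (lines.filter (fun l => x ∈ l)).card = r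
  opp : ∀ x : V,
    (Finset.univ.filter (fun y => y ≠ x ∧ ∀ l ∈ lines, ¬(x ∈ l ∧ y ∈ l))) ∈ lines

variable {V : Type} [Fintype V] [DecidableEq V] {k r : ℕ}

/-- The opposite line of a point. -/
def PentGeom.oppLine (P : PentGeom V k r) (x : V) : Finset V :=
  Finset.univ.filter (fun y => y ≠ x ∧ ∀ l ∈ P.lines, ¬(x ∈ l ∧ y ∈ l))

/-- Two points are collinear if some line contains both. -/
def PentGeom.Collinear (P : PentGeom V k r) (x y : V) : Prop :=
  x ≠ y ∧ ∃ l ∈ P.lines, x ∈ l ∧ y ∈ l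

/-- An opposite line pair. -/
def PentGeom.OppPair (P : PentGeom V k r) (l m : Finset V) : Prop :=
  l ∈ P.lines ∧ m ∈ P.lines ∧ l ≠ m ∧
    (∀ x ∈ l, P.oppLine x = m) ∧ (∀ y ∈ m, P.oppLine y = l)

/-- The finset of ordered opposite line pairs; its cardinality is twice the number of
(unordered) opposite line pairs. -/
noncomputable def PentGeom.olpOrdered (P : PentGeom V k r) : Finset (Finset V × Finset V) :=
  (P.lines ×ˢ P.lines).filter (fun p => P.OppPair p.1 p.2)

namespace PentGeom

variable (P : PentGeom V k r)

lemma mem_oppLine {x y : V} :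
    y ∈ P.oppLine x ↔ y ≠ x ∧ ∀ l ∈ P.lines, ¬(x ∈ l ∧ y ∈ l) := by
  simp [PentGeom.oppLine]

lemma oppLine_mem (x : V) : P.oppLine x ∈ P.lines := P.opp x

lemma oppLine_symm {x y : V} (h : y ∈ P.oppLine x) : x ∈ P.oppLine y := by
  rw [mem_oppLine] at h ⊢
  exact ⟨fun e => h.1 e.symm, fun l hl hc => h.2 l hl ⟨hc.2, hc.1⟩⟩

lemma not_mem_oppLine_self (x : V) : x ∉ P.oppLine x := by
  rw [mem_oppLine]; tauto

lemma OppPair.symm {l m : Finset V} (h : P.OppPair l m) : P.OppPair m l :=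
  ⟨h.2.1, h.1, h.2.2.1.symm, h.2.2.2.2, h.2.2.2.1⟩

end PentGeom

section

variable (P : PentGeom V 3 r)

lemma card_oppLine (x : V) : (P.oppLine x).card = 3 := P.uniform _ (P.oppLine_mem x)

lemma oppLine_nonempty (x : V) : (P.oppLine x).Nonempty := by
  rw [← Finset.card_pos, card_oppLine]; norm_num

lemma oppPair_unique {l m m' : Finset V} (h : P.OppPair l m) (h' : P.OppPair l m') : m = m' := by
  have hl : l.Nonempty := by
    rw [← Finset.card_pos, P.uniform l h.1]; norm_num
  obtain ⟨x, hx⟩ := hl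
  rw [← h.2.2.2.1 x hx, h'.2.2.2.1 x hx]

lemma oppPair_eq_of_mem {l m l' m' : Finset V} (h : P.OppPair l m) (h' : P.OppPair l' m')
    {x : V} (hx : x ∈ l) (hx' : x ∈ l') : l = l' := by
  have hm : m = m' := by rw [← h.2.2.2.1 x hx, h'.2.2.2.1 x hx']
  subst hm
  obtain ⟨y, hy⟩ : m.Nonempty := by
    rw [← Finset.card_pos, P.uniform m h.2.1]; norm_num
  rw [← h.2.2.2.2 y hy, h'.2.2.2.2 y hy]

/-- lines involved in some opposite pair -/
noncomputable def pairedLines : Finset (Finset V) :=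
  P.lines.filter (fun l => ∃ m, P.OppPair l m)

noncomputable def pairedPts : Finset V := (pairedLines P).biUnion id

lemma card_olp : P.olpOrdered.card = (pairedLines P).card := by
  rw [← Finset.card_image_of_injOn (f := Prod.fst)]
  · congr 1
    ext l
    simp only [Finset.mem_image, PentGeom.olpOrdered, Finset.mem_filter, Finset.mem_product,
      pairedLines]
    constructor
    · rintro ⟨⟨a, b⟩, ⟨⟨ha, hb⟩, hp⟩, rfl⟩
      exact ⟨ha, b, hp⟩
    · rintro ⟨hl, m, hp⟩
      exact ⟨(l, m), ⟨⟨hp.1, hp.2.1⟩, hp⟩, rfl⟩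
  · rintro ⟨a, b⟩ ha ⟨a', b'⟩ hb (h : a = a')
    subst h
    rw [Finset.mem_coe] at ha hb
    simp only [PentGeom.olpOrdered, Finset.mem_filter] at ha hb
    have := oppPair_unique P ha.2 hb.2
    simp [this]

lemma card_pairedPts : (pairedPts P).card = 3 * P.olpOrdered.card := by
  rw [card_olp, pairedPts, Finset.card_biUnion]
  · have h3 : ∀ l ∈ pairedLines P, (id l).card = 3 := by
      intro l hl
      rw [pairedLines, Finset.mem_filter] at hl
      exact P.uniform l hl.1
    rw [Finset.sum_congr rfl h3, Finset.sum_const, smul_eq_mul, mul_comm]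
  · intro l hl l' hl' hne
    simp only [pairedLines, Finset.mem_coe, Finset.mem_filter] at hl hl'
    obtain ⟨_, m, hm⟩ := hl
    obtain ⟨_, m', hm'⟩ := hl'
    rw [Function.onFun, Finset.disjoint_left]
    intro x hx hx'
    exact hne (oppPair_eq_of_mem P hm hm' hx hx')

end

section

variable (P : PentGeom V 3 r)

lemma card_V (P : PentGeom V 3 r) (x : V) : Fintype.card V = 2 * r + 4 := by
  classical
  set C := (P.lines.filter (fun l => x ∈ l)).biUnion (fun l => l.erase x) with hC
  have hCcard : C.card = 2 * r := by
    rw [hC, Finset.card_biUnion]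
    · have h2 : ∀ l ∈ P.lines.filter (fun l => x ∈ l), (l.erase x).card = 2 := by
        intro l hl
        rw [Finset.mem_filter] at hl
        rw [Finset.card_erase_of_mem hl.2, P.uniform l hl.1]
      rw [Finset.sum_congr rfl h2, Finset.sum_const, smul_eq_mul, P.regular x, mul_comm]
    · intro l hl l' hl' hne
      rw [Finset.mem_coe, Finset.mem_filter] at hl hl'
      rw [Function.onFun, Finset.disjoint_left]
      intro y hy hy'
      have hyx : y ≠ x := Finset.ne_of_mem_erase hy
      have hsub : ({l, l'} : Finset (Finset V)) ⊆
          P.lines.filter (fun t => x ∈ t ∧ y ∈ t) := by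
        intro t ht
        simp only [Finset.mem_insert, Finset.mem_singleton] at ht
        rcases ht with rfl | rfl
        · exact Finset.mem_filter.mpr ⟨hl.1, hl.2, Finset.mem_of_mem_erase hy⟩
        · exact Finset.mem_filter.mpr ⟨hl'.1, hl'.2, Finset.mem_of_mem_erase hy'⟩
      have h2 : ({l, l'} : Finset (Finset V)).card = 2 := Finset.card_pair hne
      have hle := Finset.card_le_card hsub
      have hp := P.pairwise x y hyx.symm
      omega
  have hunion : (Finset.univ : Finset V) = insert x (C ∪ P.oppLine x) := by
    ext y
    simp only [Finset.mem_univ, true_iff, Finset.mem_insert, Finset.mem_union]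
    by_cases hyx : y = x
    · left; exact hyx
    · right
      by_cases hcol : ∃ l ∈ P.lines, x ∈ l ∧ y ∈ l
      · left
        obtain ⟨l, hl, hxl, hyl⟩ := hcol
        rw [hC]
        exact Finset.mem_biUnion.mpr
          ⟨l, Finset.mem_filter.mpr ⟨hl, hxl⟩, Finset.mem_erase.mpr ⟨hyx, hyl⟩⟩
      · right
        rw [P.mem_oppLine]
        push_neg at hcol
        exact ⟨hyx, fun l hl hc => hcol l hl hc.1 hc.2⟩
  have hxC : x ∉ C := by
    rw [hC]
    simp
  have hxO : x ∉ P.oppLine x := P.not_mem_oppLine_self x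
  have hdisj : Disjoint C (P.oppLine x) := by
    rw [Finset.disjoint_left]
    intro y hy hy'
    rw [P.mem_oppLine] at hy'
    rw [hC, Finset.mem_biUnion] at hy
    obtain ⟨l, hl, hyl⟩ := hy
    rw [Finset.mem_filter] at hl
    exact hy'.2 l hl.1 ⟨hl.2, Finset.mem_of_mem_erase hyl⟩
  rw [← Finset.card_univ, hunion,
    Finset.card_insert_of_notMem (by simp [hxC, hxO]),
    Finset.card_union_of_disjoint hdisj, hCcard, card_oppLine]

lemma oppLine_not_paired {x y : V} (hx : x ∉ pairedPts P) (hy : y ∈ P.oppLine x) :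
    y ∉ pairedPts P := by
  intro hyP
  rw [pairedPts, Finset.mem_biUnion] at hyP
  obtain ⟨l, hl, hyl⟩ := hyP
  rw [pairedLines, Finset.mem_filter] at hl
  obtain ⟨hlL, m, hm⟩ := hl
  have hOm : P.oppLine y = m := hm.2.2.2.1 y hyl
  have hxm : x ∈ m := hOm ▸ P.oppLine_symm hy
  apply hx
  rw [pairedPts, Finset.mem_biUnion]
  refine ⟨m, ?_, hxm⟩
  rw [pairedLines, Finset.mem_filter]
  exact ⟨hm.2.1, l, hm.symm⟩

end

lemma even_card_of_invol {α : Type*} [DecidableEq α] (f : α → α) :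
    ∀ s : Finset α, (∀ x ∈ s, f x ∈ s) → (∀ x ∈ s, f (f x) = x) → (∀ x ∈ s, f x ≠ x) →
    Even s.card := by
  intro s
  induction s using Finset.strongInduction with
  | _ s ih =>
    intro hmem hinv hne
    rcases s.eq_empty_or_nonempty with rfl | ⟨x, hx⟩
    · simp
    · have hfx : f x ∈ s := hmem x hx
      have hfxx : f x ≠ x := hne x hx
      set t := (s.erase x).erase (f x) with ht
      have htmem : ∀ z, z ∈ t ↔ z ∈ s ∧ z ≠ x ∧ z ≠ f x := by
        intro z
        rw [ht, Finset.mem_erase, Finset.mem_erase]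
        tauto
      have htsub : t ⊂ s := by
        refine Finset.ssubset_iff_of_subset (fun z hz => ((htmem z).mp hz).1) |>.mpr ?_
        exact ⟨x, hx, fun hxt => (((htmem x).mp hxt).2.1) rfl⟩
      have hcard : s.card = t.card + 2 := by
        rw [ht, Finset.card_erase_of_mem (Finset.mem_erase.mpr ⟨hfxx, hfx⟩),
          Finset.card_erase_of_mem hx]
        have h2 : 1 < s.card := Finset.one_lt_card.mpr ⟨x, hx, f x, hfx, hfxx.symm⟩
        omega
      have hteven : Even t.card := by
        apply ih t htsub
        · intro z hz
          obtain ⟨hzs, hzx, hzfx⟩ := (htmem z).mp hz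
          rw [htmem]
          refine ⟨hmem z hzs, ?_, ?_⟩
          · intro h; exact hzfx (by rw [← hinv z hzs, h])
          · intro h
            apply hzx
            have := congrArg f h
            rw [hinv z hzs, hinv x hx] at this
            exact this
        · intro z hz; exact hinv z ((htmem z).mp hz).1
        · intro z hz; exact hne z ((htmem z).mp hz).1
      obtain ⟨q, hq⟩ := hteven
      exact ⟨q + 1, by omega⟩

lemma even_olp (P : PentGeom V k r) : Even P.olpOrdered.card := by
  apply even_card_of_invol Prod.swap
  · intro p hp
    rw [PentGeom.olpOrdered, Finset.mem_filter] at hp ⊢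
    refine ⟨?_, ?_⟩
    · rw [Finset.mem_product] at hp ⊢
      exact ⟨hp.1.2, hp.1.1⟩
    · exact hp.2.symm
  · intro p _; exact Prod.swap_swap p
  · intro p hp h
    rw [PentGeom.olpOrdered, Finset.mem_filter] at hp
    exact hp.2.2.2.1 ((congrArg Prod.fst h).symm : p.1 = p.2)

/-- In a PENT(3,r) the number q of opposite line pairs satisfies
q ≤ (r+2)/3 if r ≡ 1 (mod 3) and q ≤ (r-3)/3 if r ≡ 0 (mod 3).  Here `olpOrdered.card`
is 2q, so the bounds read 3·(2q) ≤ 2(r+2) and 3·(2q) ≤ 2(r-3) respectively. -/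
theorem stmt8 (r : ℕ) (V : Type) [Fintype V] [DecidableEq V] (P : PentGeom V 3 r) :
    (r % 3 = 1 → 3 * P.olpOrdered.card ≤ 2 * (r + 2)) ∧
    (r % 3 = 0 → 3 * P.olpOrdered.card ≤ 2 * (r - 3)) := by
  cases isEmpty_or_nonempty V with
  | inl hE =>
    have hempty : P.olpOrdered = ∅ := by
      rw [Finset.eq_empty_iff_forall_notMem]
      rintro ⟨l, m⟩ hp
      rw [PentGeom.olpOrdered, Finset.mem_filter] at hp
      have h3 := P.uniform l hp.2.1
      have hl0 : l = ∅ := Finset.eq_empty_of_isEmpty l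
      simp [hl0] at h3
    constructor <;> intro _ <;> simp [hempty]
  | inr hN =>
    obtain ⟨x⟩ := hN
    have hv : Fintype.card V = 2 * r + 4 := card_V P x
    have hP : (pairedPts P).card ≤ 2 * r + 4 := by
      rw [← hv, ← Finset.card_univ]
      exact Finset.card_le_univ _
    rw [card_pairedPts] at hP
    have heven : Even P.olpOrdered.card := even_olp P
    refine ⟨fun _ => by omega, fun hr => ?_⟩
    obtain ⟨q, hq⟩ := heven
    have hr3 : 3 ∣ r := Nat.dvd_of_mod_eq_zero hr
    obtain ⟨s, rfl⟩ := hr3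
    have hs1 : 1 ≤ s := by have := P.rep_pos; omega
    by_cases hqs : q ≤ s - 1
    · omega
    · exfalso
      have hq6 : q = s := by omega
      set S := Finset.univ \ pairedPts P with hSdef
      have hScard : S.card = 4 := by
        rw [hSdef, Finset.card_sdiff_of_subset (Finset.subset_univ _), Finset.card_univ, hv,
          card_pairedPts]
        omega
      have hkey : ∀ y ∈ S, P.oppLine y ⊆ S.erase y := by
        intro y hyS z hz
        rw [Finset.mem_erase]
        refine ⟨(P.mem_oppLine.mp hz).1, ?_⟩
        rw [hSdef, Finset.mem_sdiff]
        rw [hSdef, Finset.mem_sdiff] at hyS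
        exact ⟨Finset.mem_univ _, oppLine_not_paired P hyS.2 hz⟩
      have hOeq : ∀ y ∈ S, P.oppLine y = S.erase y := by
        intro y hyS
        apply Finset.eq_of_subset_of_card_le (hkey y hyS)
        rw [Finset.card_erase_of_mem hyS, hScard, card_oppLine]
      obtain ⟨y, hyS⟩ : S.Nonempty := by rw [← Finset.card_pos, hScard]; norm_num
      obtain ⟨a, ha, b, hb, hab⟩ := Finset.one_lt_card.mp
        (by rw [card_oppLine] ; norm_num : 1 < (P.oppLine y).card)
      have haS : a ∈ S := Finset.mem_of_mem_erase ((hOeq y hyS) ▸ ha)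
      have hbS : b ∈ S := Finset.mem_of_mem_erase ((hOeq y hyS) ▸ hb)
      have hbo : b ∈ P.oppLine a := by
        rw [hOeq a haS, Finset.mem_erase]
        exact ⟨hab.symm, hbS⟩
      exact (P.mem_oppLine.mp hbo).2 (P.oppLine y) (P.oppLine_mem y) ⟨ha, hb⟩
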